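/- arXiv:1908.01535 — 3 statements merged into one kernel-verified Lean document; each statement's English description precedes it below -/
import Mathlib

section
/- A coatom X of a simple matroid M on ground set E is modular if and only if for any two distinct atoms e, e' in E \ X there exists an atom e'' in X such that {e, e', e''} is a circuit of M. -/
open scoped Classical

namespace Paper

variable {α : Type*}
open Set

/-- The rank of a set in a matroid: the maximum size of an independent subset. -/
noncomputable def mrk (M : Matroid α) (X : Set α) : ℕ :=
  sSup {n | ∃ I, M.Indep I ∧ I ⊆ X ∧ I.ncard = n}

/-- A circuit of a matroid: a minimal dependent subset of the ground set. -/
def Circuit (M : Matroid α) (C : Set α) : Prop :=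
  C ⊆ M.E ∧ ¬ M.Indep C ∧ ∀ D ⊂ C, M.Indep D

/-- A matroid is simple if every subset of the ground set with at most two
elements is independent. -/
def SimpleM (M : Matroid α) : Prop :=
  ∀ X ⊆ M.E, X.ncard ≤ 2 → M.Indep X

/-- A modular flat: a flat `X` with `r X + r Y = r (X ⊓ Y) + r (X ⊔ Y)` for every flat `Y`
(meet of flats is intersection; join is the closure of the union). -/
def ModularFlat (M : Matroid α) (X : Set α) : Prop :=
  M.IsFlat X ∧ ∀ Y, M.IsFlat Y →
    mrk M X + mrk M Y = mrk M (X ∩ Y) + mrk M (M.closure (X ∪ Y))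

/-- A matroid is round if its ground set is not the union of two proper flats. -/
def Round (M : Matroid α) : Prop :=
  ¬ ∃ F₁ F₂ : Set α, M.IsFlat F₁ ∧ M.IsFlat F₂ ∧ F₁ ≠ M.E ∧ F₂ ≠ M.E ∧ M.E = F₁ ∪ F₂

variable {M : Matroid α} {X Y I J : Set α} {e : α}

lemma mrk_bdd (hfin : M.E.Finite) (X : Set α) :
    BddAbove {n | ∃ I, M.Indep I ∧ I ⊆ X ∧ I.ncard = n} := by
  refine ⟨M.E.ncard, ?_⟩
  rintro n ⟨I, hI, -, rfl⟩
  exact Set.ncard_le_ncard hI.subset_ground hfin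

lemma mrk_nonempty (M : Matroid α) (X : Set α) :
    {n | ∃ I, M.Indep I ∧ I ⊆ X ∧ I.ncard = n}.Nonempty :=
  ⟨0, ∅, M.empty_indep, empty_subset X, by simp⟩

lemma ncard_le_mrk (hfin : M.E.Finite) (hI : M.Indep I) (hIX : I ⊆ X) :
    I.ncard ≤ mrk M X :=
  le_csSup (mrk_bdd hfin X) ⟨I, hI, hIX, rfl⟩

lemma mrk_le {n : ℕ} (h : ∀ I, M.Indep I → I ⊆ X → I.ncard ≤ n) : mrk M X ≤ n :=
  csSup_le (mrk_nonempty M X) (by rintro m ⟨I, hI, hIX, rfl⟩; exact h I hI hIX)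

lemma basis_mrk_eq (hfin : M.E.Finite) (hI : M.IsBasis I X) : mrk M X = I.ncard := by
  refine le_antisymm (mrk_le fun J hJ hJX => ?_) (ncard_le_mrk hfin hI.indep hI.subset)
  obtain ⟨J', hJ', hJJ'⟩ := hJ.subset_isBasis_of_subset hJX hI.subset_ground
  have h1 : J.ncard ≤ J'.ncard :=
    Set.ncard_le_ncard hJJ' (hfin.subset hJ'.indep.subset_ground)
  have h2 : J'.ncard = I.ncard := by
    rw [Set.ncard_def, Set.ncard_def, hJ'.encard_eq_encard hI]
  omega

lemma closure_flat' (M : Matroid α) (X : Set α) : M.IsFlat (M.closure X) := by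
  rw [Matroid.closure_def]
  have hne : Nonempty ↑{F | M.IsFlat F ∧ X ∩ M.E ⊆ F} :=
    ⟨⟨M.E, M.ground_isFlat, inter_subset_right⟩⟩
  rw [Set.sInter_eq_iInter]
  exact Matroid.IsFlat.iInter fun F => F.2.1

lemma mrk_le_ground (hfin : M.E.Finite) : mrk M X ≤ mrk M M.E :=
  mrk_le fun I hI _ => ncard_le_mrk hfin hI hI.subset_ground

lemma mrk_step {Z : Set α} (hfin : M.E.Finite) (hflat : M.IsFlat X)
    (hcoatom : mrk M X + 1 = mrk M M.E)
    (he : e ∈ M.E \ X) (hXZ : X ⊆ Z) (heZ : e ∈ Z) :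
    mrk M Z = mrk M X + 1 := by
  obtain ⟨I, hI⟩ := M.exists_isBasis X hflat.subset_ground
  have hclI : M.closure I = X := by rw [hI.closure_eq_closure, hflat.closure]
  have heI : e ∉ I := fun h => he.2 (hI.subset h)
  have hIe : M.Indep (insert e I) := by
    rw [hI.indep.insert_indep_iff_of_notMem heI, hclI]
    exact he
  have h1 : mrk M X + 1 ≤ mrk M Z := by
    have := ncard_le_mrk hfin hIe (insert_subset heZ (hI.subset.trans hXZ))
    rwa [Set.ncard_insert_of_notMem heI (hfin.subset hI.indep.subset_ground),
      ← basis_mrk_eq hfin hI] at this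
  exact le_antisymm (hcoatom ▸ mrk_le_ground hfin) h1

/-- Brylawski: a coatom `X` of a simple matroid is modular iff any two distinct
elements outside `X` form a circuit with some element of `X`. -/
theorem stmt0 (M : Matroid α) (hfin : M.E.Finite) (hsimple : SimpleM M)
    {X : Set α} (hflat : M.IsFlat X) (hcoatom : mrk M X + 1 = mrk M M.E) :
    ModularFlat M X ↔
      ∀ e e' : α, e ∈ M.E \ X → e' ∈ M.E \ X → e ≠ e' →
        ∃ e'' ∈ X, Circuit M {e, e', e''} := by
  constructor
  · intro hmod e e' he he' hne
    set L := M.closure {e, e'} with hLdef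
    have hpairE : ({e, e'} : Set α) ⊆ M.E :=
      insert_subset he.1 (singleton_subset_iff.mpr he'.1)
    have hpair : M.Indep {e, e'} :=
      hsimple _ hpairE (by rw [Set.ncard_pair hne])
    have hLflat : M.IsFlat L := closure_flat' M _
    have heq := hmod.2 L hLflat
    have hmrkL : mrk M L = 2 := by
      rw [basis_mrk_eq hfin hpair.isBasis_closure, Set.ncard_pair hne]
    have heL : e ∈ L := M.mem_closure_of_mem (by left; rfl) hpairE
    have hclXL : mrk M (M.closure (X ∪ L)) = mrk M X + 1 := by
      refine mrk_step hfin hflat hcoatom he ?_ ?_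
      · exact (subset_union_left).trans (M.subset_closure _
          (union_subset hflat.subset_ground hLflat.subset_ground))
      · exact M.subset_closure _ (union_subset hflat.subset_ground hLflat.subset_ground)
          (Or.inr heL)
    rw [hmrkL, hclXL] at heq
    have h1 : mrk M (X ∩ L) = 1 := by omega
    obtain ⟨J, hJ⟩ := M.exists_isBasis (X ∩ L)
      ((inter_subset_left).trans hflat.subset_ground)
    have hJ1 : J.ncard = 1 := by rw [← basis_mrk_eq hfin hJ, h1]
    obtain ⟨e'', rfl⟩ := Set.ncard_eq_one.mp hJ1
    have he'' : e'' ∈ X ∩ L := hJ.subset rfl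
    have hne1 : e'' ≠ e := fun h => he.2 (h ▸ he''.1)
    have hne2 : e'' ≠ e' := fun h => he'.2 (h ▸ he''.1)
    have hCeq : ({e, e', e''} : Set α) = insert e'' {e, e'} := by
      ext x; simp only [mem_insert_iff, mem_singleton_iff]; tauto
    refine ⟨e'', he''.1, ?_, ?_, ?_⟩
    · exact insert_subset he.1 (insert_subset he'.1
        (singleton_subset_iff.mpr (hflat.subset_ground he''.1)))
    · intro hind
      rw [hCeq] at hind
      have : e'' ∉ M.closure {e, e'} :=
        ((hpair.insert_indep_iff_of_notMem (by simp [hne1, hne2])).mp hind).2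
      exact this he''.2
    · intro D hD
      refine hsimple D (hD.subset.trans (insert_subset he.1 (insert_subset he'.1
        (singleton_subset_iff.mpr (hflat.subset_ground he''.1))))) ?_
      have hCfin : ({e, e', e''} : Set α).Finite := by
        exact (Set.finite_singleton e'').insert e' |>.insert e
      have hlt : D.ncard < ({e, e', e''} : Set α).ncard := Set.ncard_lt_ncard hD hCfin
      have : ({e, e', e''} : Set α).ncard ≤ 3 := by
        refine (Set.ncard_insert_le _ _).trans ?_
        have := (Set.ncard_insert_le e' ({e''} : Set α))
        simp only [Set.ncard_singleton] at this ⊢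
        omega
      omega
  · intro hcirc
    refine ⟨hflat, fun Y hY => ?_⟩
    by_cases hYX : Y ⊆ X
    · rw [Set.inter_eq_self_of_subset_right hYX, Set.union_eq_self_of_subset_right hYX,
        hflat.closure]
      omega
    · obtain ⟨a0, ha0Y, ha0X⟩ := not_subset.mp hYX
      have ha0E : a0 ∈ M.E := hY.subset_ground ha0Y
      have hclE : mrk M (M.closure (X ∪ Y)) = mrk M X + 1 := by
        refine mrk_step hfin hflat hcoatom ⟨ha0E, ha0X⟩ ?_ ?_
        · exact (subset_union_left).trans (M.subset_closure _
            (union_subset hflat.subset_ground hY.subset_ground))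
        · exact M.subset_closure _ (union_subset hflat.subset_ground hY.subset_ground)
            (Or.inr ha0Y)
      rw [hclE]
      suffices h : mrk M Y = mrk M (X ∩ Y) + 1 by omega
      obtain ⟨I, hI⟩ := M.exists_isBasis (X ∩ Y) ((inter_subset_right).trans hY.subset_ground)
      have hIfin : I.Finite := hfin.subset hI.indep.subset_ground
      have hclI : M.closure I = M.closure (X ∩ Y) := hI.closure_eq_closure
      have hclIX : M.closure I ⊆ X := by
        rw [hclI]
        exact (M.closure_subset_closure inter_subset_left).trans hflat.closure.subset
      have hXYclI : X ∩ Y ⊆ M.closure I := by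
        rw [hclI]
        exact M.subset_closure _ ((inter_subset_right).trans hY.subset_ground)
      have ha0I : a0 ∉ I := fun h => ha0X (hI.subset h).1
      have hIa0 : M.Indep (insert a0 I) := by
        rw [hI.indep.insert_indep_iff_of_notMem ha0I]
        exact ⟨ha0E, fun h => ha0X (hclIX h)⟩
      have hge : mrk M (X ∩ Y) + 1 ≤ mrk M Y := by
        have := ncard_le_mrk hfin hIa0
          (insert_subset ha0Y (hI.subset.trans inter_subset_right))
        rwa [Set.ncard_insert_of_notMem ha0I hIfin, ← basis_mrk_eq hfin hI] at this
      have hle : mrk M Y ≤ mrk M (X ∩ Y) + 1 := by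
        obtain ⟨J, hJ, hIJ⟩ := hI.indep.subset_isBasis_of_subset
          (hI.subset.trans inter_subset_right) hY.subset_ground
        have hJfin : J.Finite := hfin.subset hJ.indep.subset_ground
        have hsub : (J \ I).Subsingleton := by
          intro a ha b hb
          by_contra hab
          have haY : a ∈ Y := hJ.subset ha.1
          have hbY : b ∈ Y := hJ.subset hb.1
          have haE : a ∈ M.E := hY.subset_ground haY
          have hbE : b ∈ M.E := hY.subset_ground hbY
          -- a ∉ X
          have hnotX : ∀ c ∈ J \ I, c ∉ X := by
            rintro c hc hcX
            have hins : M.Indep (insert c I) :=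
              hJ.indep.subset (insert_subset hc.1 hIJ)
            exact ((hI.indep.insert_indep_iff_of_notMem hc.2).mp hins).2
              (hXYclI ⟨hcX, hJ.subset hc.1⟩)
          have haX : a ∉ X := hnotX a ha
          have hbX : b ∉ X := hnotX b hb
          obtain ⟨e'', he''X, hCE, hCdep, hCmin⟩ := hcirc a b ⟨haE, haX⟩ ⟨hbE, hbX⟩ hab
          have he''E : e'' ∈ M.E := hflat.subset_ground he''X
          have hne1 : e'' ≠ a := fun h => haX (h ▸ he''X)
          have hne2 : e'' ≠ b := fun h => hbX (h ▸ he''X)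
          have habind : M.Indep {a, b} :=
            hJ.indep.subset (insert_subset ha.1 (singleton_subset_iff.mpr hb.1))
          -- e'' ∈ cl {a,b}
          have hCeq : ({a, b, e''} : Set α) = insert e'' {a, b} := by
            ext x; simp only [mem_insert_iff, mem_singleton_iff]; tauto
          have he''cl : e'' ∈ M.closure {a, b} := by
            by_contra hnot
            exact hCdep (hCeq ▸ (habind.insert_indep_iff_of_notMem
              (by simp [hne1, hne2])).mpr ⟨he''E, hnot⟩)
          have he''Y : e'' ∈ Y := by
            have : M.closure {a, b} ⊆ Y := by
              rw [← hY.closure]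
              exact M.closure_subset_closure
                (insert_subset haY (singleton_subset_iff.mpr hbY))
            exact this he''cl
          have he''clI : e'' ∈ M.closure I := hXYclI ⟨he''X, he''Y⟩
          -- {b, e''} independent, being a proper subset of the circuit
          have hbe'' : M.Indep {b, e''} := by
            refine hCmin _ ((Set.ssubset_iff_of_subset ?_).mpr ⟨a, Or.inl rfl, ?_⟩)
            · intro x hx
              rcases hx with h | h
              · exact Or.inr (Or.inl h)
              · exact Or.inr (Or.inr h)
            · simp only [mem_insert_iff, mem_singleton_iff]
              push_neg
              exact ⟨hab, fun h => hne1 h.symm⟩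
          -- a ∈ cl {b, e''}
          have hacl : a ∈ M.closure {b, e''} := by
            by_contra hnot
            exact hCdep ((hbe''.insert_indep_iff_of_notMem
              (by simp only [mem_insert_iff, mem_singleton_iff]; push_neg;
                  exact ⟨hab, fun h => hne1 h.symm⟩)).mpr ⟨haE, hnot⟩)
          -- but cl {b, e''} ⊆ cl (insert b I)
          have hsubcl : M.closure {b, e''} ⊆ M.closure (insert b I) := by
            refine M.closure_subset_closure_of_subset_closure ?_
            rintro x (rfl | rfl)
            · exact M.mem_closure_of_mem (Or.inl rfl) (insert_subset hbE hI.indep.subset_ground)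
            · exact (M.closure_subset_closure (subset_insert b I)) he''clI
          have haclbI : a ∈ M.closure (insert b I) := hsubcl hacl
          -- contradiction with independence of insert a (insert b I) ⊆ J
          have hbIind : M.Indep (insert b I) := hJ.indep.subset (insert_subset hb.1 hIJ)
          have habI : a ∉ insert b I := by
            simp only [mem_insert_iff]
            push_neg
            exact ⟨hab, ha.2⟩
          have : M.Indep (insert a (insert b I)) :=
            hJ.indep.subset (insert_subset ha.1 (insert_subset hb.1 hIJ))
          exact ((hbIind.insert_indep_iff_of_notMem habI).mp this).2 haclbI
        have hcard : J.ncard ≤ I.ncard + 1 := by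
          have h1 : J = I ∪ (J \ I) := (union_diff_cancel hIJ).symm
          have h2 : (J \ I).ncard ≤ 1 := by
            rcases hsub.eq_empty_or_singleton with h | ⟨x, h⟩
            · simp [h]
            · simp [h]
          calc J.ncard = (I ∪ (J \ I)).ncard := by rw [← h1]
            _ ≤ I.ncard + (J \ I).ncard := Set.ncard_union_le _ _
            _ ≤ I.ncard + 1 := by omega
        rw [basis_mrk_eq hfin hJ, basis_mrk_eq hfin hI]
        exact hcard
      omega

end Paper
end

section
/- If X is a modular flat of a simple matroid M and Y is a modular flat of the restriction M|X, then Y is a modular flat of M. -/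
open scoped Classical Matroid

namespace Paper

variable {α : Type*}

open Set

variable {M : Matroid α} {A B X Y F I J : Set α}

lemma basis'_ncard_le (hfin : M.E.Finite) (hI : M.IsBasis' I A) (hJ : M.Indep J)
    (hJA : J ⊆ A) : J.ncard ≤ I.ncard := by
  obtain ⟨J', hJ', hJJ'⟩ := hJ.subset_isBasis'_of_subset hJA
  have h1 : J'.ncard = I.ncard :=
    (Matroid.isBase_restrict_iff'.2 hJ').ncard_eq_ncard_of_isBase (Matroid.isBase_restrict_iff'.2 hI)
  exact (Set.ncard_le_ncard hJJ' (hfin.subset hJ'.indep.subset_ground)).trans h1.le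

lemma basis'_mrk_eq (hfin : M.E.Finite) (hI : M.IsBasis' I A) : mrk M A = I.ncard := by
  have hub : ∀ n ∈ {n | ∃ J, M.Indep J ∧ J ⊆ A ∧ J.ncard = n}, n ≤ I.ncard := by
    rintro n ⟨J, hJ, hJA, rfl⟩
    exact basis'_ncard_le hfin hI hJ hJA
  exact le_antisymm (csSup_le ⟨0, ∅, M.empty_indep, empty_subset _, by simp⟩ hub)
    (le_csSup ⟨I.ncard, hub⟩ ⟨I, hI.indep, hI.subset, rfl⟩)

lemma mrk_closure_eq (hfin : M.E.Finite) (A : Set α) : mrk M (M.closure A) = mrk M A := by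
  obtain ⟨I, hI⟩ := M.exists_isBasis' A
  rw [basis'_mrk_eq hfin hI, basis'_mrk_eq hfin hI.isBasis_closure_right.isBasis']

lemma mrk_mono (hfin : M.E.Finite) (hAB : A ⊆ B) : mrk M A ≤ mrk M B := by
  obtain ⟨I, hI⟩ := M.exists_isBasis' A
  obtain ⟨J, hJ⟩ := M.exists_isBasis' B
  rw [basis'_mrk_eq hfin hI, basis'_mrk_eq hfin hJ]
  exact basis'_ncard_le hfin hJ hI.indep (hI.subset.trans hAB)

lemma mrk_submod (hfin : M.E.Finite) (A B : Set α) :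
    mrk M (A ∩ B) + mrk M (A ∪ B) ≤ mrk M A + mrk M B := by
  obtain ⟨I, hI⟩ := M.exists_isBasis' (A ∩ B)
  obtain ⟨J, hJ, hIJ⟩ := hI.indep.subset_isBasis'_of_subset
    (hI.subset.trans (inter_subset_left.trans subset_union_left))
  rw [basis'_mrk_eq hfin hI, basis'_mrk_eq hfin hJ]
  have hJfin : J.Finite := hfin.subset hJ.indep.subset_ground
  have h2 : (J ∩ A) ∩ (J ∩ B) = I := by
    have : J ∩ (A ∩ B) = I :=
      (hI.eq_of_subset_indep (hJ.indep.subset inter_subset_left)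
        (subset_inter hIJ hI.subset) inter_subset_right).symm
    rw [← this]; ext x; constructor <;> (intro hx; simp at hx ⊢; tauto)
  have h1 : (J ∩ A) ∪ (J ∩ B) = J := by
    rw [← inter_union_distrib_left]; exact inter_eq_left.2 hJ.subset
  have hcard := Set.ncard_union_add_ncard_inter (J ∩ A) (J ∩ B)
    (hJfin.subset inter_subset_left) (hJfin.subset inter_subset_left)
  rw [h1, h2] at hcard
  obtain ⟨IA, hIA⟩ := M.exists_isBasis' A
  obtain ⟨IB, hIB⟩ := M.exists_isBasis' B
  have hA : (J ∩ A).ncard ≤ mrk M A := by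
    rw [basis'_mrk_eq hfin hIA]
    exact basis'_ncard_le hfin hIA (hJ.indep.subset inter_subset_left) inter_subset_right
  have hB : (J ∩ B).ncard ≤ mrk M B := by
    rw [basis'_mrk_eq hfin hIB]
    exact basis'_ncard_le hfin hIB (hJ.indep.subset inter_subset_left) inter_subset_right
  omega

lemma mrk_restrict (hAX : A ⊆ X) : mrk (M ↾ X) A = mrk M A := by
  unfold mrk
  congr 1
  ext n
  constructor <;> rintro ⟨I, hI, hIA, rfl⟩
  · exact ⟨I, (Matroid.restrict_indep_iff.1 hI).1, hIA, rfl⟩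
  · exact ⟨I, Matroid.restrict_indep_iff.2 ⟨hI, hIA.trans hAX⟩, hIA, rfl⟩

lemma restrict_closure (hAX : A ⊆ X) (hXE : X ⊆ M.E) :
    (M ↾ X).closure A = M.closure A ∩ X := by
  obtain ⟨I, hI⟩ := M.exists_isBasis' A
  have hIX : (M ↾ X).IsBasis' I A := Matroid.isBasis'_restrict_iff.2
    ⟨by rwa [inter_eq_left.2 hAX], hI.subset.trans hAX⟩
  rw [← hI.closure_eq_closure, ← hIX.closure_eq_closure,
    hI.indep.closure_eq_setOf_isBasis_insert, hIX.indep.closure_eq_setOf_isBasis_insert]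
  ext x
  simp only [mem_setOf_eq, mem_inter_iff, Matroid.isBasis_restrict_iff']
  constructor
  · rintro ⟨hb, hs⟩
    rw [inter_eq_left.2 (hs.trans hXE)] at hb
    exact ⟨hb, hs (mem_insert _ _)⟩
  · rintro ⟨hb, hx⟩
    have hsub : insert x I ⊆ X := insert_subset hx (hI.subset.trans hAX)
    rw [inter_eq_left.2 (hsub.trans hXE)]
    exact ⟨hb, hsub⟩

lemma flat_of_closure_subset (hFE : F ⊆ M.E) (h : M.closure F ⊆ F) : M.IsFlat F := by
  refine ⟨fun I Xx hIF hIX => ?_, hFE⟩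
  have hs := hIX.subset_closure
  rw [hIF.closure_eq_closure] at hs
  exact hs.trans h

/-- A modular flat of the restriction to a modular flat is a modular flat. -/
theorem stmt2 (M : Matroid α) (hfin : M.E.Finite) (hsimple : SimpleM M)
    {X Y : Set α} (hX : ModularFlat M X) (hY : ModularFlat (M ↾ X) Y) :
    ModularFlat M Y := by
  obtain ⟨hXf, hXmod⟩ := hX
  obtain ⟨hYf, hYmod⟩ := hY
  have hXE : X ⊆ M.E := hXf.subset_ground
  have hYX : Y ⊆ X := hYf.subset_ground
  have hclY : M.closure Y ∩ X = Y := by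
    rw [← restrict_closure hYX hXE]; exact hYf.closure
  have hYflat : M.IsFlat Y := by
    refine flat_of_closure_subset (hYX.trans hXE) ?_
    have h1 : M.closure Y ⊆ X := (M.closure_subset_closure hYX).trans_eq hXf.closure
    exact (subset_inter Subset.rfl h1).trans hclY.subset
  refine ⟨hYflat, fun F hF => ?_⟩
  have hFE : F ⊆ M.E := hF.subset_ground
  have hXF : M.IsFlat (X ∩ F) := by
    refine flat_of_closure_subset (inter_subset_left.trans hXE) ?_
    refine subset_inter ?_ ?_
    · exact (M.closure_subset_closure inter_subset_left).trans_eq hXf.closure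
    · exact (M.closure_subset_closure inter_subset_right).trans_eq hF.closure
  have hXFr : (M ↾ X).IsFlat (X ∩ F) := by
    refine flat_of_closure_subset (show X ∩ F ⊆ (M ↾ X).E from inter_subset_left) ?_
    rw [restrict_closure inter_subset_left hXE, hXF.closure]
    exact inter_subset_left
  set W := M.closure (Y ∪ F) with hW
  have hWflat : M.IsFlat W := by
    refine flat_of_closure_subset (M.closure_subset_ground _) ?_
    rw [hW, M.closure_closure]
  have e1 := hXmod F hF
  have e2 := hXmod W hWflat
  have e3 := hYmod (X ∩ F) hXFr
  have hfinr : (M ↾ X).E.Finite := hfin.subset hXE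
  rw [mrk_closure_eq hfinr] at e3
  rw [mrk_restrict hYX, mrk_restrict inter_subset_left,
    mrk_restrict (inter_subset_left.trans hYX),
    mrk_restrict (union_subset hYX inter_subset_left)] at e3
  have hYXF : Y ∩ (X ∩ F) = Y ∩ F := by
    rw [← inter_assoc, inter_eq_self_of_subset_left hYX]
  rw [hYXF] at e3
  have hYW : Y ⊆ W := M.subset_closure_of_subset' subset_union_left (hYX.trans hXE)
  have hFW : F ⊆ W := M.subset_closure_of_subset' subset_union_right hFE
  have ha : mrk M (Y ∪ (X ∩ F)) ≤ mrk M (X ∩ W) :=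
    mrk_mono hfin (subset_inter (union_subset hYX inter_subset_left)
      (union_subset hYW (inter_subset_right.trans hFW)))
  have hb : mrk M (M.closure (X ∪ F)) ≤ mrk M (M.closure (X ∪ W)) :=
    mrk_mono hfin (M.closure_subset_closure (union_subset_union_right _ hFW))
  have hc : mrk M W = mrk M (Y ∪ F) := mrk_closure_eq hfin (Y ∪ F)
  have hd := mrk_submod hfin Y F
  have hgoal : mrk M (M.closure (Y ∪ F)) = mrk M (Y ∪ F) := mrk_closure_eq hfin (Y ∪ F)
  rw [hgoal]
  omega


end Paper
end

section
/- If X is a modular element of a geometric lattice L, then the characteristic polynomial χ([0̂, X], t) divides the characteristic polynomial χ(L, t) in ℤ[t]. -/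
open scoped Classical

namespace Paper

/-- A geometric lattice with rank function `r`: `r ⊥ = 0`, `r` increases by one along
covers, `r` is strictly monotone and submodular, and every element is a join of atoms. -/
def IsGeometric (L : Type*) [Lattice L] [BoundedOrder L] [Fintype L] (r : L → ℕ) : Prop :=
  r ⊥ = 0 ∧ (∀ a b : L, a ⋖ b → r b = r a + 1) ∧ (∀ a b : L, a < b → r a < r b) ∧
  (∀ a b : L, r (a ⊔ b) + r (a ⊓ b) ≤ r a + r b) ∧
  (∀ x : L, ∃ s : Set L, (∀ a ∈ s, IsAtom a) ∧ IsLUB s x)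

/-- A modular element of a lattice with rank function `r`. -/
def ModularElt {L : Type*} [Lattice L] (r : L → ℕ) (x : L) : Prop :=
  ∀ y : L, r x + r y = r (x ⊓ y) + r (x ⊔ y)

/-- Möbius function (measured from the bottom) of a finite lattice. -/
noncomputable def lmob (L : Type*) [Lattice L] [OrderBot L] [Fintype L] : L → ℤ
  | x =>
    if x = ⊥ then 1
    else - ∑ y ∈ (Finset.univ.filter (fun y : L => y < x)).attach, lmob L y.1
termination_by x => (Finset.univ.filter (fun y : L => y < x)).card
decreasing_by
  · have hy := y.2
    simp only [Finset.mem_filter] at hy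
    apply Finset.card_lt_card
    constructor
    · intro z hz
      simp only [Finset.mem_filter, Finset.mem_univ, true_and] at hz ⊢
      exact hz.trans hy.2
    · intro hsub
      have := hsub (Finset.mem_filter.mpr ⟨Finset.mem_univ _, hy.2⟩)
      simp only [Finset.mem_filter] at this
      exact lt_irrefl _ this.2

/-- The characteristic polynomial of a finite bounded lattice with rank function `r`:
`χ(L, t) = ∑_{x ∈ L} μ(x) t^(r ⊤ - r x)`. -/
noncomputable def charPolyL (L : Type*) [Lattice L] [BoundedOrder L] [Fintype L]
    (r : L → ℕ) : Polynomial ℤ :=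
  ∑ x : L, Polynomial.C (lmob L x) * Polynomial.X ^ (r ⊤ - r x)

section Lemmas

variable {L : Type*} [Lattice L] [OrderBot L] [Fintype L]

theorem lmob_def (x : L) : lmob L x =
    if x = ⊥ then 1 else - ∑ y ∈ Finset.univ.filter (fun y : L => y < x), lmob L y := by
  rw [lmob]
  congr 1
  rw [← Finset.sum_attach (Finset.univ.filter (fun y : L => y < x)) (fun y => lmob L y)]

theorem lmob_bot : lmob L (⊥ : L) = 1 := by rw [lmob_def]; simp

theorem sum_lmob_le (x : L) :
    ∑ y ∈ Finset.univ.filter (fun y : L => y ≤ x), lmob L y = if x = ⊥ then 1 else 0 := by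
  have h : Finset.univ.filter (fun y : L => y ≤ x)
      = insert x (Finset.univ.filter (fun y : L => y < x)) := by
    ext z; simp [Finset.mem_insert, le_iff_lt_or_eq, or_comm]
  rw [h, Finset.sum_insert (by simp)]
  split_ifs with hx
  · subst hx
    rw [lmob_bot]
    have : Finset.univ.filter (fun y : L => y < (⊥:L)) = ∅ := by
      ext z; simp [not_lt_bot]
    simp [this]
  · rw [lmob_def, if_neg hx]; ring

theorem lmob_Iic (X : L) : ∀ (z : L) (hz : z ≤ X), lmob (Set.Iic X) ⟨z, hz⟩ = lmob L z := by
  refine fun z => wellFounded_lt.induction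
    (C := fun z => ∀ hz : z ≤ X, lmob (Set.Iic X) ⟨z, hz⟩ = lmob L z) z ?_
  intro z IH hz
  · rw [lmob_def, lmob_def]
    by_cases hzb : z = ⊥
    · subst hzb
      have h1 : (⟨⊥, hz⟩ : Set.Iic X) = ⊥ := rfl
      rw [h1]
      simp
    · rw [if_neg (fun h => hzb (congrArg Subtype.val h)), if_neg hzb]
      congr 1
      refine Finset.sum_bij' (i := fun (a : Set.Iic X) (_ : a ∈ Finset.univ.filter
          (fun y : Set.Iic X => y < ⟨z, hz⟩)) => a.1)
        (j := fun (w : L) (hw : w ∈ Finset.univ.filter (fun y : L => y < z)) =>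
          (⟨w, le_trans (le_of_lt (by simpa using hw)) hz⟩ : Set.Iic X)) ?_ ?_ ?_ ?_ ?_
      · intro a ha; simp at ha ⊢; exact ha
      · intro w hw; simp at hw ⊢; exact hw
      · intro a ha; rfl
      · intro w hw; rfl
      · intro a ha
        simp only [Finset.mem_filter, Finset.mem_univ, true_and] at ha
        have := IH a.1 ha a.2
        simpa using this

noncomputable def pairSum (X x : L) : ℤ :=
  ∑ p ∈ Finset.univ.filter
      (fun p : L × L => p.1 ≤ X ∧ p.2 ⊓ X = ⊥ ∧ p.1 ⊔ p.2 = x),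
    lmob L p.1 * lmob L p.2

theorem sum_pairSum_le (X x : L) :
    ∑ y ∈ Finset.univ.filter (fun y : L => y ≤ x), pairSum X y
      = if x = ⊥ then 1 else 0 := by
  have hfib := Finset.sum_fiberwise_eq_sum_filter
    (s := Finset.univ.filter (fun p : L × L => p.1 ≤ X ∧ p.2 ⊓ X = ⊥))
    (t := Finset.univ.filter (fun y : L => y ≤ x))
    (g := fun p : L × L => p.1 ⊔ p.2)
    (f := fun p : L × L => lmob L p.1 * lmob L p.2)
  have h1 : ∑ y ∈ Finset.univ.filter (fun y : L => y ≤ x), pairSum X y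
      = ∑ p ∈ (Finset.univ.filter (fun p : L × L => p.1 ≤ X ∧ p.2 ⊓ X = ⊥)).filter
          (fun p => p.1 ⊔ p.2 ∈ Finset.univ.filter (fun y : L => y ≤ x)),
        lmob L p.1 * lmob L p.2 := by
    rw [← hfib]
    apply Finset.sum_congr rfl
    intro y _
    unfold pairSum
    apply Finset.sum_congr
    · ext p; simp only [Finset.mem_filter, Finset.mem_univ, true_and]; tauto
    · intros; rfl
  have h2 : (Finset.univ.filter (fun p : L × L => p.1 ≤ X ∧ p.2 ⊓ X = ⊥)).filter
          (fun p => p.1 ⊔ p.2 ∈ Finset.univ.filter (fun y : L => y ≤ x))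
      = (Finset.univ.filter (fun a : L => a ≤ X ⊓ x)) ×ˢ
        (Finset.univ.filter (fun b : L => b ⊓ X = ⊥ ∧ b ≤ x)) := by
    ext p
    simp only [Finset.mem_filter, Finset.mem_univ, true_and, Finset.mem_product,
      sup_le_iff, le_inf_iff]
    tauto
  rw [h1, h2, Finset.sum_product, ← Finset.sum_mul_sum, sum_lmob_le]
  by_cases hXx : X ⊓ x = ⊥
  · rw [if_pos hXx, one_mul]
    have h3 : Finset.univ.filter (fun b : L => b ⊓ X = ⊥ ∧ b ≤ x)
        = Finset.univ.filter (fun b : L => b ≤ x) := by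
      ext b
      simp only [Finset.mem_filter, Finset.mem_univ, true_and, and_iff_right_iff_imp]
      intro hb
      exact le_bot_iff.mp (hXx ▸ le_inf inf_le_right (inf_le_left.trans hb))
    rw [h3, sum_lmob_le]
  · rw [if_neg hXx, zero_mul]
    have : x ≠ ⊥ := fun h => hXx (by simp [h])
    rw [if_neg this]

theorem lmob_eq_pairSum (X : L) : ∀ x : L, lmob L x = pairSum X x := by
  refine fun x => wellFounded_lt.induction
    (C := fun x => lmob L x = pairSum X x) x ?_
  intro x IH
  have hins : Finset.univ.filter (fun y : L => y ≤ x)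
      = insert x (Finset.univ.filter (fun y : L => y < x)) := by
    ext z; simp [Finset.mem_insert, le_iff_lt_or_eq, or_comm]
  have hm := sum_lmob_le x
  have hp := sum_pairSum_le X x
  rw [hins, Finset.sum_insert (by simp)] at hm hp
  have hsum : ∑ y ∈ Finset.univ.filter (fun y : L => y < x), lmob L y
      = ∑ y ∈ Finset.univ.filter (fun y : L => y < x), pairSum X y := by
    apply Finset.sum_congr rfl
    intro y hy
    simp only [Finset.mem_filter, Finset.mem_univ, true_and] at hy
    exact IH y hy
  omega

end Lemmas

theorem rank_facts {L : Type*} [Lattice L] [BoundedOrder L] [Fintype L] (r : L → ℕ)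
    (hgeom : IsGeometric L r) {X : L} (hX : ModularElt r X) {a b : L}
    (ha : a ≤ X) (hb : b ⊓ X = ⊥) :
    r (a ⊔ b) = r a + r b ∧ r a ≤ r X ∧ r X + r b ≤ r ⊤ := by
  obtain ⟨hbot, _, hmono, hsub, _⟩ := hgeom
  have mono : ∀ u v : L, u ≤ v → r u ≤ r v := by
    intro u v h
    rcases lt_or_eq_of_le h with h | h
    · exact (hmono _ _ h).le
    · exact h ▸ le_rfl
  have hXb : X ⊓ b = ⊥ := by rw [inf_comm]; exact hb
  have h2 : r X + r b = r (X ⊔ b) := by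
    have := hX b
    rw [hXb, hbot] at this
    omega
  have hsupeq : X ⊔ (a ⊔ b) = X ⊔ b := by
    rw [← sup_assoc, sup_eq_left.mpr ha]
  have h1 : r X + r (a ⊔ b) = r (X ⊓ (a ⊔ b)) + r (X ⊔ b) := by
    have := hX (a ⊔ b)
    rw [hsupeq] at this
    exact this
  have h3 : r a ≤ r (X ⊓ (a ⊔ b)) := mono _ _ (le_inf ha le_sup_left)
  have hab : a ⊓ b = ⊥ := by
    rw [← le_bot_iff, ← hb]
    exact (inf_le_inf_right b ha).trans_eq (inf_comm X b)
  have h4 : r (a ⊔ b) + r (a ⊓ b) ≤ r a + r b := hsub a b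
  rw [hab, hbot] at h4
  have h5 : r a ≤ r X := mono _ _ ha
  have h6 : r (X ⊔ b) ≤ r ⊤ := mono _ _ le_top
  omega

/-- Stanley: if `X` is a modular element of a geometric lattice `L`, then
`χ([0̂, X], t)` divides `χ(L, t)`. -/
theorem stmt10 {L : Type*} [Lattice L] [BoundedOrder L] [Fintype L] (r : L → ℕ)
    (hgeom : IsGeometric L r) {X : L} (hX : ModularElt r X) :
    charPolyL (Set.Iic X) (fun y => r y.1) ∣ charPolyL L r := by
  refine ⟨∑ b ∈ Finset.univ.filter (fun b : L => b ⊓ X = ⊥),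
    Polynomial.C (lmob L b) * Polynomial.X ^ (r ⊤ - r X - r b), ?_⟩
  have hchi : charPolyL (Set.Iic X) (fun y => r y.1)
      = ∑ a ∈ Finset.univ.filter (fun a : L => a ≤ X),
          Polynomial.C (lmob L a) * Polynomial.X ^ (r X - r a) := by
    unfold charPolyL
    rw [Finset.sum_subtype (p := fun a => a ∈ Set.Iic X)
      (Finset.univ.filter (fun a : L => a ≤ X))
      (by intro a; simp [Set.mem_Iic])
      (fun a => Polynomial.C (lmob L a) * Polynomial.X ^ (r X - r a))]
    apply Finset.sum_congr rfl
    intro y _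
    have h := lmob_Iic X y.1 y.2
    rw [Subtype.coe_eta] at h
    rw [h]
    rfl
  rw [hchi]
  unfold charPolyL
  calc ∑ x : L, Polynomial.C (lmob L x) * Polynomial.X ^ (r ⊤ - r x)
      = ∑ x : L, ∑ p ∈ (Finset.univ.filter
            (fun p : L × L => p.1 ≤ X ∧ p.2 ⊓ X = ⊥)).filter
            (fun p => p.1 ⊔ p.2 = x),
          Polynomial.C (lmob L p.1 * lmob L p.2)
            * Polynomial.X ^ (r ⊤ - r (p.1 ⊔ p.2)) := by
        apply Finset.sum_congr rfl
        intro x _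
        rw [lmob_eq_pairSum X x]
        unfold pairSum
        rw [map_sum, Finset.sum_mul]
        apply Finset.sum_congr
        · rw [Finset.filter_filter]
          apply Finset.filter_congr
          intro p _
          tauto
        · intro p hp
          simp only [Finset.mem_filter, Finset.mem_univ, true_and] at hp
          rw [hp.2]
    _ = ∑ p ∈ Finset.univ.filter (fun p : L × L => p.1 ≤ X ∧ p.2 ⊓ X = ⊥),
          Polynomial.C (lmob L p.1 * lmob L p.2)
            * Polynomial.X ^ (r ⊤ - r (p.1 ⊔ p.2)) :=
        Finset.sum_fiberwise _ _ _
    _ = ∑ a ∈ Finset.univ.filter (fun a : L => a ≤ X),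
          ∑ b ∈ Finset.univ.filter (fun b : L => b ⊓ X = ⊥),
          Polynomial.C (lmob L a * lmob L b)
            * Polynomial.X ^ (r ⊤ - r (a ⊔ b)) := by
        rw [show Finset.univ.filter (fun p : L × L => p.1 ≤ X ∧ p.2 ⊓ X = ⊥)
            = (Finset.univ.filter (fun a : L => a ≤ X)) ×ˢ
              (Finset.univ.filter (fun b : L => b ⊓ X = ⊥)) by
          ext p
          simp only [Finset.mem_filter, Finset.mem_univ, true_and, Finset.mem_product]]
        rw [Finset.sum_product]
    _ = ∑ a ∈ Finset.univ.filter (fun a : L => a ≤ X),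
          ∑ b ∈ Finset.univ.filter (fun b : L => b ⊓ X = ⊥),
          (Polynomial.C (lmob L a) * Polynomial.X ^ (r X - r a)) *
          (Polynomial.C (lmob L b) * Polynomial.X ^ (r ⊤ - r X - r b)) := by
        apply Finset.sum_congr rfl
        intro a ha
        apply Finset.sum_congr rfl
        intro b hb
        simp only [Finset.mem_filter, Finset.mem_univ, true_and] at ha hb
        obtain ⟨hr1, hr2, hr3⟩ := rank_facts r hgeom hX ha hb
        have hexp : r ⊤ - r (a ⊔ b) = (r X - r a) + (r ⊤ - r X - r b) := by omega
        rw [hexp, pow_add, map_mul]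
        ring
    _ = (∑ a ∈ Finset.univ.filter (fun a : L => a ≤ X),
          Polynomial.C (lmob L a) * Polynomial.X ^ (r X - r a)) *
        (∑ b ∈ Finset.univ.filter (fun b : L => b ⊓ X = ⊥),
          Polynomial.C (lmob L b) * Polynomial.X ^ (r ⊤ - r X - r b)) := by
        rw [Finset.sum_mul_sum]


end Paper
end
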